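/- Let X, S, Z be discrete random variables with X taking values in 𝒳, S taking values in 𝒮, such that X is independent of the pair (S, Z) and X ~ P_X. Then I(S − X; X | Z) ≥ min over pmfs θ on 𝒮 of I(S̃ − X̃; X̃), where X̃ ~ P_X and S̃ ~ θ are independent. -/
import Mathlib


open Finset
open scoped Classical

namespace SmartMeter

/-! ### Basic information measures for finitely supported distributions.
All entropies and mutual informations are in bits (base-2 logarithms). -/

/-- Probability that the random variable `Z` takes the value `z` under the pmf `p`. -/
noncomputable def pr {Ω α : Type*} [Fintype Ω] [DecidableEq α]
    (p : Ω → ℝ) (Z : Ω → α) (z : α) : ℝ :=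
  ∑ ω ∈ Finset.univ.filter (fun ω => Z ω = z), p ω

/-- Shannon entropy (in bits) of the random variable `Z` under the pmf `p`. -/
noncomputable def ent {Ω α : Type*} [Fintype Ω] [DecidableEq α]
    (p : Ω → ℝ) (Z : Ω → α) : ℝ :=
  -∑ z ∈ Finset.univ.image Z, pr p Z z * Real.logb 2 (pr p Z z)

/-- Mutual information `I(A; B)`. -/
noncomputable def mutInfo {Ω α β : Type*} [Fintype Ω] [DecidableEq α] [DecidableEq β]
    (p : Ω → ℝ) (A : Ω → α) (B : Ω → β) : ℝ :=
  ent p A + ent p B - ent p (fun ω => (A ω, B ω))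

/-- Conditional entropy `H(A | C)`. -/
noncomputable def condEnt {Ω α γ : Type*} [Fintype Ω] [DecidableEq α] [DecidableEq γ]
    (p : Ω → ℝ) (A : Ω → α) (C : Ω → γ) : ℝ :=
  ent p (fun ω => (A ω, C ω)) - ent p C

/-- Conditional mutual information `I(A; B | C)`. -/
noncomputable def condMutInfo {Ω α β γ : Type*} [Fintype Ω] [DecidableEq α] [DecidableEq β]
    [DecidableEq γ] (p : Ω → ℝ) (A : Ω → α) (B : Ω → β) (C : Ω → γ) : ℝ :=
  ent p (fun ω => (A ω, C ω)) + ent p (fun ω => (B ω, C ω))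
    - ent p (fun ω => (A ω, B ω, C ω)) - ent p C

/-- `p` is a probability mass function on the finite type `Ω`. -/
def IsPMF {Ω : Type*} [Fintype Ω] (p : Ω → ℝ) : Prop :=
  (∀ ω, 0 ≤ p ω) ∧ ∑ ω, p ω = 1

/-- Extension of a pmf on `{0, …, n}` to an integer-indexed function (zero out of range). -/
noncomputable def extZ {n : ℕ} (f : Fin (n + 1) → ℝ) (k : ℤ) : ℝ :=
  if h : 0 ≤ k ∧ k ≤ (n : ℤ) then f ⟨k.toNat, by omega⟩ else 0

/-! ### The single-letter quantity `J*` -/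

/-- `I(S - X; X)` for independent `X ~ PX` on `{0,…,mx}` and `S ~ θ` on `{0,…,ms}`. -/
noncomputable def iidMI (mx ms : ℕ) (PX : Fin (mx + 1) → ℝ) (θ : Fin (ms + 1) → ℝ) : ℝ :=
  mutInfo (fun ω : Fin (mx + 1) × Fin (ms + 1) => PX ω.1 * θ ω.2)
    (fun ω => ((ω.2 : ℕ) : ℤ) - ((ω.1 : ℕ) : ℤ)) (fun ω => ω.1)

/-- `J* = min over pmfs θ on 𝒮 of I(S - X; X)`. -/
noncomputable def Jstar (mx ms : ℕ) (PX : Fin (mx + 1) → ℝ) : ℝ :=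
  sInf {r : ℝ | ∃ θ : Fin (ms + 1) → ℝ, IsPMF θ ∧ iidMI mx ms PX θ = r}

/-! ### The structured policy `b*` -/

/-- `ξ(w) = Σ_{(x,s) : s - x = w} PX(x) θ(s)`, the pmf of `W = S - X`. -/
noncomputable def xiOf (mx ms : ℕ) (PX : Fin (mx + 1) → ℝ) (θ : Fin (ms + 1) → ℝ)
    (w : ℤ) : ℝ :=
  ∑ x : Fin (mx + 1), ∑ s : Fin (ms + 1),
    if ((s : ℕ) : ℤ) - ((x : ℕ) : ℤ) = w then PX x * θ s else 0

/-- The structured policy with respect to `(θ, ξ)`: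
`b(y|w) = PX(y) θ(y + w) / ξ(w)` for `y ∈ 𝒳 ∩ 𝒴₀(w)` (when `ξ(w) > 0`), else `0`. -/
noncomputable def bstar (mx my ms : ℕ) (PX : Fin (mx + 1) → ℝ) (θ : Fin (ms + 1) → ℝ)
    (w : ℤ) (y : Fin (my + 1)) : ℝ :=
  if xiOf mx ms PX θ w = 0 then 0
  else extZ PX ((y : ℕ) : ℤ) * extZ θ (((y : ℕ) : ℤ) + w) / xiOf mx ms PX θ w

/-! ### Trajectory spaces, policies and induced joint laws.
Time is indexed from `0`; `ω = (s₁, x, y)` records the initial battery state `S₁ = ω.1`,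
the demands `X_{t+1} = ω.2.1 t` and the outputs `Y_{t+1} = ω.2.2 t` for `t = 0, …, T-1`. -/

/-- Trajectories of horizon `T`. -/
abbrev Traj (mx my ms T : ℕ) :=
  Fin (ms + 1) × (Fin T → Fin (mx + 1)) × (Fin T → Fin (my + 1))

variable {mx my ms T : ℕ}

/-- Demand at (0-based) time `t`, as an integer (junk value `0` for `t ≥ T`). -/
def Xat (ω : Traj mx my ms T) (t : ℕ) : ℤ :=
  if h : t < T then ((ω.2.1 ⟨t, h⟩ : ℕ) : ℤ) else 0

/-- Output at (0-based) time `t`, as an integer (junk value `0` for `t ≥ T`). -/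
def Yat (ω : Traj mx my ms T) (t : ℕ) : ℤ :=
  if h : t < T then ((ω.2.2 ⟨t, h⟩ : ℕ) : ℤ) else 0

/-- Battery state at (0-based) time `t`: `S_{t+1} = S_t + Y_t - X_t`, `Sat ω 0 = S₁`. -/
def Sat (ω : Traj mx my ms T) (t : ℕ) : ℤ :=
  ((ω.1 : ℕ) : ℤ) + ∑ i ∈ Finset.range t, (Yat ω i - Xat ω i)

/-- `W_t = S_t - X_t`. -/
def Wat (ω : Traj mx my ms T) (t : ℕ) : ℤ := Sat ω t - Xat ω t

/-- A general causal (class `Q_A`) randomized battery policy: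
`q_t(y_t | x^t, s^t, y^{t-1})`; since `s^t` is determined by `(s₁, x^{t-1}, y^{t-1})`,
the policy is a function of `(x^t, s₁, y^{t-1})`. -/
def PolicyA (mx my ms : ℕ) : Type :=
  (t : ℕ) → (Fin (t + 1) → Fin (mx + 1)) → Fin (ms + 1) → (Fin t → Fin (my + 1)) →
    Fin (my + 1) → ℝ

/-- A class-`Q_B` policy: `q_t(y_t | x_t, s_t, y^{t-1})`. -/
def PolicyB (mx my ms : ℕ) : Type :=
  (t : ℕ) → Fin (mx + 1) → ℤ → (Fin t → Fin (my + 1)) → Fin (my + 1) → ℝ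

/-- The battery state `S_t` computed from `s₁` and the history `(x^t, y^{t-1})`. -/
def hstate {t : ℕ} (s1 : Fin (ms + 1)) (x : Fin (t + 1) → Fin (mx + 1))
    (y : Fin t → Fin (my + 1)) : ℤ :=
  ((s1 : ℕ) : ℤ) + ∑ i : Fin t, (((y i : ℕ) : ℤ) - ((x i.castSucc : ℕ) : ℤ))

/-- Each `q_t(· | x^t, s^t, y^{t-1})` is a pmf on `𝒴`. -/
def CondPMFA (q : PolicyA mx my ms) : Prop :=
  ∀ (t : ℕ) (x : Fin (t + 1) → Fin (mx + 1)) (s1 : Fin (ms + 1)) (y : Fin t → Fin (my + 1)),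
    (∀ yt, 0 ≤ q t x s1 y yt) ∧ ∑ yt, q t x s1 y yt = 1

/-- Feasibility of a class-`Q_A` policy: conditional pmfs supported on
`𝒴₀(s_t - x_t) = {y ∈ 𝒴 : s_t - x_t + y ∈ 𝒮}`. -/
def FeasibleA (q : PolicyA mx my ms) : Prop :=
  CondPMFA q ∧
  ∀ (t : ℕ) (x : Fin (t + 1) → Fin (mx + 1)) (s1 : Fin (ms + 1)) (y : Fin t → Fin (my + 1)),
    ∀ yt, q t x s1 y yt ≠ 0 →
      0 ≤ hstate s1 x y - ((x (Fin.last t) : ℕ) : ℤ) + ((yt : ℕ) : ℤ) ∧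
      hstate s1 x y - ((x (Fin.last t) : ℕ) : ℤ) + ((yt : ℕ) : ℤ) ≤ (ms : ℤ)

/-- Each `q_t(· | x_t, s_t, y^{t-1})` is a pmf on `𝒴`. -/
def CondPMFB (q : PolicyB mx my ms) : Prop :=
  ∀ (t : ℕ) (xt : Fin (mx + 1)) (s : ℤ) (y : Fin t → Fin (my + 1)),
    (∀ yt, 0 ≤ q t xt s y yt) ∧ ∑ yt, q t xt s y yt = 1

/-- Feasibility of a class-`Q_B` policy. -/
def FeasibleB (q : PolicyB mx my ms) : Prop :=
  CondPMFB q ∧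
  ∀ (t : ℕ) (xt : Fin (mx + 1)) (s : ℤ) (y : Fin t → Fin (my + 1)),
    0 ≤ s → s ≤ (ms : ℤ) →
    ∀ yt, q t xt s y yt ≠ 0 →
      0 ≤ s - ((xt : ℕ) : ℤ) + ((yt : ℕ) : ℤ) ∧
      s - ((xt : ℕ) : ℤ) + ((yt : ℕ) : ℤ) ≤ (ms : ℤ)

/-- The demand prefix `x^t = (x_0, …, x_t)` of a trajectory. -/
def prefX (ω : Traj mx my ms T) (t : Fin T) : Fin ((t : ℕ) + 1) → Fin (mx + 1) :=
  fun i => ω.2.1 ⟨(i : ℕ), lt_of_le_of_lt (Nat.lt_succ_iff.mp i.isLt) t.isLt⟩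

/-- The output prefix `y^{t-1} = (y_0, …, y_{t-1})` of a trajectory. -/
def prefY (ω : Traj mx my ms T) (t : Fin T) : Fin (t : ℕ) → Fin (my + 1) :=
  fun i => ω.2.2 ⟨(i : ℕ), i.isLt.trans t.isLt⟩

/-- Joint law on trajectories induced by i.i.d. demand `PX`, initial battery pmf `PS1`
(independent of the demand), and a class-`Q_A` policy `q`. -/
noncomputable def jointA (PS1 : Fin (ms + 1) → ℝ) (PX : Fin (mx + 1) → ℝ)
    (q : PolicyA mx my ms) (T : ℕ) (ω : Traj mx my ms T) : ℝ :=
  PS1 ω.1 * ∏ t : Fin T,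
    (PX (ω.2.1 t) * q (t : ℕ) (prefX ω t) ω.1 (prefY ω t) (ω.2.2 t))

/-- Weight of a demand trajectory under a Markov chain `(PX1, Qm)`. -/
noncomputable def markovWt (PX1 : Fin (mx + 1) → ℝ) (Qm : Fin (mx + 1) → Fin (mx + 1) → ℝ)
    {T : ℕ} (x : Fin T → Fin (mx + 1)) : ℝ :=
  ∏ t : Fin T,
    if _h : (t : ℕ) = 0 then PX1 (x t)
    else Qm (x ⟨(t : ℕ) - 1, lt_of_le_of_lt (Nat.sub_le _ _) t.isLt⟩) (x t)

/-- Joint law on trajectories induced by Markov demand and a class-`Q_A` policy. -/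
noncomputable def jointAMarkov (PS1 : Fin (ms + 1) → ℝ) (PX1 : Fin (mx + 1) → ℝ)
    (Qm : Fin (mx + 1) → Fin (mx + 1) → ℝ) (q : PolicyA mx my ms) (T : ℕ)
    (ω : Traj mx my ms T) : ℝ :=
  PS1 ω.1 * markovWt PX1 Qm ω.2.1 *
    ∏ t : Fin T, q (t : ℕ) (prefX ω t) ω.1 (prefY ω t) (ω.2.2 t)

/-- Joint law on trajectories induced by Markov demand and a class-`Q_B` policy. -/
noncomputable def jointBMarkov (PS1 : Fin (ms + 1) → ℝ) (PX1 : Fin (mx + 1) → ℝ)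
    (Qm : Fin (mx + 1) → Fin (mx + 1) → ℝ) (q : PolicyB mx my ms) (T : ℕ)
    (ω : Traj mx my ms T) : ℝ :=
  PS1 ω.1 * markovWt PX1 Qm ω.2.1 *
    ∏ t : Fin T, q (t : ℕ) (ω.2.1 t) (Sat ω (t : ℕ)) (prefY ω t) (ω.2.2 t)

/-- The memoryless time-invariant policy `q_t(y | x, s) = b*(y | s - x)`, as a member of the
class of general causal policies. -/
noncomputable def structuredPolicyA (mx my ms : ℕ) (PX : Fin (mx + 1) → ℝ)
    (θ : Fin (ms + 1) → ℝ) : PolicyA mx my ms :=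
  fun t x s1 y yt => bstar mx my ms PX θ (hstate s1 x y - ((x (Fin.last t) : ℕ) : ℤ)) yt


/-! ### Auxiliary lemmas for Statement 2 -/

section Aux2

variable {Ω Ω' α β γ κ : Type*} [Fintype Ω] [Fintype Ω']

lemma pr_nonneg [DecidableEq α] {p : Ω → ℝ} (hp : ∀ ω, 0 ≤ p ω) (Z : Ω → α) (z : α) :
    0 ≤ pr p Z z :=
  Finset.sum_nonneg fun _ _ => hp _

lemma pr_eq_zero [DecidableEq α] (p : Ω → ℝ) (Z : Ω → α) {z : α}
    (hz : z ∉ Finset.univ.image Z) : pr p Z z = 0 := by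
  refine Finset.sum_eq_zero fun ω hω => ?_
  exact absurd (Finset.mem_image.mpr ⟨ω, Finset.mem_univ ω, (Finset.mem_filter.mp hω).2⟩) hz

lemma sum_pr [DecidableEq α] (p : Ω → ℝ) (Z : Ω → α) :
    ∑ z ∈ Finset.univ.image Z, pr p Z z = ∑ ω, p ω :=
  Finset.sum_fiberwise_of_maps_to (fun ω _ => Finset.mem_image_of_mem Z (Finset.mem_univ ω)) p

lemma ent_superset [DecidableEq α] (p : Ω → ℝ) (Z : Ω → α) {t : Finset α}
    (ht : Finset.univ.image Z ⊆ t) :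
    ent p Z = -∑ z ∈ t, pr p Z z * Real.logb 2 (pr p Z z) := by
  unfold ent
  congr 1
  refine Finset.sum_subset ht fun z _ hz => ?_
  rw [pr_eq_zero p Z hz, zero_mul]

lemma ent_congr [DecidableEq α] (p : Ω → ℝ) (q : Ω' → ℝ) (Z : Ω → α) (Z' : Ω' → α)
    (h : ∀ z, pr p Z z = pr q Z' z) : ent p Z = ent q Z' := by
  rw [ent_superset p Z (t := Finset.univ.image Z ∪ Finset.univ.image Z') Finset.subset_union_left,
    ent_superset q Z' (t := Finset.univ.image Z ∪ Finset.univ.image Z') Finset.subset_union_right]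
  simp_rw [h]

lemma pr_marg_fst [DecidableEq α] [DecidableEq β] (p : Ω → ℝ) (A : Ω → α) (B : Ω → β)
    {u : Finset β} (hu : Finset.univ.image B ⊆ u) (a : α) :
    pr p A a = ∑ b ∈ u, pr p (fun ω => (A ω, B ω)) (a, b) := by
  have h1 : ∀ b, pr p (fun ω => (A ω, B ω)) (a, b)
      = ∑ ω ∈ (Finset.univ.filter fun ω => A ω = a).filter (fun ω => B ω = b), p ω := by
    intro b
    unfold pr
    congr 1
    rw [Finset.filter_filter]
    ext ω
    simp [Prod.ext_iff]
  simp_rw [h1]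
  exact (Finset.sum_fiberwise_of_maps_to
    (fun ω _ => hu (Finset.mem_image_of_mem B (Finset.mem_univ ω))) p).symm

lemma pr_marg_snd [DecidableEq α] [DecidableEq β] (p : Ω → ℝ) (A : Ω → α) (B : Ω → β)
    {u : Finset α} (hu : Finset.univ.image A ⊆ u) (b : β) :
    pr p B b = ∑ a ∈ u, pr p (fun ω => (A ω, B ω)) (a, b) := by
  have h1 : ∀ a, pr p (fun ω => (A ω, B ω)) (a, b)
      = ∑ ω ∈ (Finset.univ.filter fun ω => B ω = b).filter (fun ω => A ω = a), p ω := by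
    intro a
    unfold pr
    congr 1
    rw [Finset.filter_filter]
    ext ω
    simp [Prod.ext_iff, and_comm]
  simp_rw [h1]
  exact (Finset.sum_fiberwise_of_maps_to
    (fun ω _ => hu (Finset.mem_image_of_mem A (Finset.mem_univ ω))) p).symm

lemma pr_pair_le_fst [DecidableEq α] [DecidableEq β] {p : Ω → ℝ} (hp : ∀ ω, 0 ≤ p ω)
    (A : Ω → α) (B : Ω → β) (a : α) (b : β) :
    pr p (fun ω => (A ω, B ω)) (a, b) ≤ pr p A a := by
  apply Finset.sum_le_sum_of_subset_of_nonneg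
  · intro ω hω
    simp only [Finset.mem_filter, Finset.mem_univ, true_and, Prod.mk.injEq] at hω ⊢
    exact hω.1
  · intro ω _ _; exact hp ω

lemma pr_pair_le_snd [DecidableEq α] [DecidableEq β] {p : Ω → ℝ} (hp : ∀ ω, 0 ≤ p ω)
    (A : Ω → α) (B : Ω → β) (a : α) (b : β) :
    pr p (fun ω => (A ω, B ω)) (a, b) ≤ pr p B b := by
  apply Finset.sum_le_sum_of_subset_of_nonneg
  · intro ω hω
    simp only [Finset.mem_filter, Finset.mem_univ, true_and, Prod.mk.injEq] at hω ⊢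
    exact hω.2
  · intro ω _ _; exact hp ω

lemma pr_comp [DecidableEq α] [Fintype κ] [DecidableEq κ] (p : Ω → ℝ) (F : Ω → κ)
    (g : κ → α) (a : α) :
    pr p (fun ω => g (F ω)) a = ∑ v : κ, if g v = a then pr p F v else 0 := by
  unfold pr
  rw [Finset.sum_filter]
  have h1 : ∀ v : κ,
      (if g v = a then ∑ ω ∈ Finset.univ.filter (fun ω => F ω = v), p ω else 0)
        = ∑ ω : Ω, if F ω = v then (if g v = a then p ω else 0) else 0 := by
    intro v
    rw [← Finset.sum_filter]
    split <;> simp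
  simp_rw [h1]
  rw [Finset.sum_comm]
  refine Finset.sum_congr rfl fun ω _ => ?_
  rw [Finset.sum_ite_eq Finset.univ (F ω) (fun v => if g v = a then p ω else 0)]
  simp

lemma pr_pair_assoc [DecidableEq α] [DecidableEq β] [DecidableEq γ] (p : Ω → ℝ)
    (A : Ω → α) (B : Ω → β) (C : Ω → γ) (a : α) (b : β) (c : γ) :
    pr p (fun ω => ((A ω, B ω), C ω)) ((a, b), c)
      = pr p (fun ω => (A ω, B ω, C ω)) (a, b, c) := by
  unfold pr
  congr 1
  ext ω
  simp [Prod.ext_iff, and_assoc]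

lemma ent_comp_inj [DecidableEq α] [DecidableEq β] (p : Ω → ℝ) (Z : Ω → α) (f : α → β)
    (hf : Function.Injective f) : ent p (fun ω => f (Z ω)) = ent p Z := by
  have h1 : ∀ z, pr p (fun ω => f (Z ω)) (f z) = pr p Z z := by
    intro z
    unfold pr
    congr 1
    ext ω
    simp [hf.eq_iff]
  unfold ent
  rw [show (Finset.univ.image fun ω => f (Z ω)) = (Finset.univ.image Z).image f from by
    rw [Finset.image_image]; rfl]
  rw [Finset.sum_image (fun x _ y _ h => hf h)]
  simp_rw [h1]

/-- Conditional distribution given `C = c`. -/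
noncomputable def condp [DecidableEq γ] (p : Ω → ℝ) (C : Ω → γ) (c : γ) : Ω → ℝ :=
  fun ω => if C ω = c then p ω / pr p C c else 0

lemma condp_nonneg [DecidableEq γ] {p : Ω → ℝ} (hp : ∀ ω, 0 ≤ p ω) (C : Ω → γ) (c : γ)
    (ω : Ω) : 0 ≤ condp p C c ω := by
  unfold condp
  split
  · exact div_nonneg (hp ω) (pr_nonneg hp C c)
  · exact le_refl 0

lemma pr_condp [DecidableEq α] [DecidableEq γ] (p : Ω → ℝ) (C : Ω → γ) (c : γ)
    (A : Ω → α) (a : α) :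
    pr (condp p C c) A a = pr p (fun ω => (A ω, C ω)) (a, c) / pr p C c := by
  unfold pr condp
  rw [← Finset.sum_filter, Finset.filter_filter, ← Finset.sum_div]
  have : (Finset.univ.filter fun ω => A ω = a ∧ C ω = c)
      = Finset.univ.filter (fun ω => (A ω, C ω) = (a, c)) := by
    ext ω
    simp [Prod.ext_iff]
  rw [this]
  rfl

lemma sum_condp [DecidableEq γ] (p : Ω → ℝ) (C : Ω → γ) (c : γ) :
    ∑ ω, condp p C c ω = pr p C c / pr p C c := by
  unfold condp pr
  rw [← Finset.sum_filter, ← Finset.sum_div]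

lemma phi_mul {x y : ℝ} (hx : 0 ≤ x) (hy : 0 ≤ y) :
    x * y * Real.logb 2 (x * y)
      = y * (x * Real.logb 2 x) + x * (y * Real.logb 2 y) := by
  rcases eq_or_lt_of_le hx with h | hx'
  · simp [← h]
  rcases eq_or_lt_of_le hy with h | hy'
  · simp [← h]
  rw [Real.logb, Real.logb, Real.logb, Real.log_mul (ne_of_gt hx') (ne_of_gt hy')]
  ring

lemma ent_pair [DecidableEq α] [DecidableEq γ] {p : Ω → ℝ} (hp : ∀ ω, 0 ≤ p ω)
    (A : Ω → α) (C : Ω → γ) :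
    ent p (fun ω => (A ω, C ω))
      = ent p C + ∑ c ∈ Finset.univ.image C, pr p C c * ent (condp p C c) A := by
  have hsub : Finset.univ.image (fun ω => (A ω, C ω))
      ⊆ (Finset.univ.image A) ×ˢ (Finset.univ.image C) := by
    intro v hv
    simp only [Finset.mem_image, Finset.mem_univ, true_and] at hv
    obtain ⟨ω, rfl⟩ := hv
    exact Finset.mem_product.mpr
      ⟨Finset.mem_image_of_mem _ (Finset.mem_univ _),
        Finset.mem_image_of_mem _ (Finset.mem_univ _)⟩
  have key : ∀ c ∈ Finset.univ.image C,
      ∑ a ∈ Finset.univ.image A,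
        pr p (fun ω => (A ω, C ω)) (a, c)
          * Real.logb 2 (pr p (fun ω => (A ω, C ω)) (a, c))
      = pr p C c * Real.logb 2 (pr p C c) - pr p C c * ent (condp p C c) A := by
    intro c _
    have hJ : ∀ a, pr p (fun ω => (A ω, C ω)) (a, c)
        = pr p C c * pr (condp p C c) A a := by
      intro a
      rw [pr_condp]
      rcases eq_or_ne (pr p C c) 0 with h0 | h0
      · rw [h0, zero_mul]
        exact le_antisymm (h0 ▸ pr_pair_le_snd hp A C a c) (pr_nonneg hp _ _)
      · field_simp
    have hsum : ∑ a ∈ Finset.univ.image A, pr (condp p C c) A a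
        = pr p C c / pr p C c := by
      rw [sum_pr, sum_condp]
    simp_rw [hJ]
    have hstep : ∀ a, pr p C c * pr (condp p C c) A a
        * Real.logb 2 (pr p C c * pr (condp p C c) A a)
        = pr (condp p C c) A a * (pr p C c * Real.logb 2 (pr p C c))
          + pr p C c * (pr (condp p C c) A a
            * Real.logb 2 (pr (condp p C c) A a)) := fun a =>
      phi_mul (pr_nonneg hp C c) (pr_nonneg (condp_nonneg hp C c) A a)
    simp_rw [hstep]
    rw [Finset.sum_add_distrib, ← Finset.sum_mul, hsum, ← Finset.mul_sum]
    have hent : ent (condp p C c) A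
        = -∑ a ∈ Finset.univ.image A,
            pr (condp p C c) A a * Real.logb 2 (pr (condp p C c) A a) := rfl
    rw [hent]
    rcases eq_or_ne (pr p C c) 0 with h0 | h0
    · rw [h0]; ring
    · rw [div_self h0]; ring
  rw [ent_superset p _ hsub, Finset.sum_product, Finset.sum_comm,
    Finset.sum_congr rfl key, Finset.sum_sub_distrib]
  have hC : ent p C
      = -∑ c ∈ Finset.univ.image C, pr p C c * Real.logb 2 (pr p C c) := rfl
  rw [hC]
  ring

lemma mutInfo_congr [DecidableEq α] [DecidableEq β] (p : Ω → ℝ) (q : Ω' → ℝ)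
    (A : Ω → α) (B : Ω → β) (A' : Ω' → α) (B' : Ω' → β)
    (h : ∀ a b, pr p (fun ω => (A ω, B ω)) (a, b) = pr q (fun ω => (A' ω, B' ω)) (a, b)) :
    mutInfo p A B = mutInfo q A' B' := by
  unfold mutInfo
  have hA : ent p A = ent q A' := by
    apply ent_congr
    intro a
    rw [pr_marg_fst p A B (u := Finset.univ.image B ∪ Finset.univ.image B')
        Finset.subset_union_left a,
      pr_marg_fst q A' B' (u := Finset.univ.image B ∪ Finset.univ.image B')
        Finset.subset_union_right a]
    exact Finset.sum_congr rfl fun b _ => h a b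
  have hB : ent p B = ent q B' := by
    apply ent_congr
    intro b
    rw [pr_marg_snd p A B (u := Finset.univ.image A ∪ Finset.univ.image A')
        Finset.subset_union_left b,
      pr_marg_snd q A' B' (u := Finset.univ.image A ∪ Finset.univ.image A')
        Finset.subset_union_right b]
    exact Finset.sum_congr rfl fun a _ => h a b
  have hAB : ent p (fun ω => (A ω, B ω)) = ent q (fun ω => (A' ω, B' ω)) := by
    apply ent_congr
    intro v
    exact h v.1 v.2
  rw [hA, hB, hAB]

lemma gibbs_term {x u v : ℝ} (hx : 0 ≤ x) (hxu : x ≤ u) (hxv : x ≤ v)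
    (hu : 0 ≤ u) (hv : 0 ≤ v) :
    (x - u * v) / Real.log 2
      ≤ x * Real.logb 2 x - x * Real.logb 2 u - x * Real.logb 2 v := by
  have hlog2 : 0 < Real.log 2 := Real.log_pos (by norm_num)
  rcases eq_or_lt_of_le hx with h | hx'
  · rw [← h]
    simp only [zero_mul, zero_sub, sub_zero, neg_zero, sub_self, zero_div]
    apply div_nonpos_of_nonpos_of_nonneg
    · nlinarith
    · exact le_of_lt hlog2
  · have hu' : 0 < u := lt_of_lt_of_le hx' hxu
    have hv' : 0 < v := lt_of_lt_of_le hx' hxv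
    have key : Real.log (u * v / x) ≤ u * v / x - 1 :=
      Real.log_le_sub_one_of_pos (by positivity)
    have h2 : Real.log (u * v / x) = Real.log u + Real.log v - Real.log x := by
      rw [Real.log_div (by positivity) (ne_of_gt hx'),
        Real.log_mul (ne_of_gt hu') (ne_of_gt hv')]
    have h4 : x * Real.log (u * v / x) ≤ u * v - x := by
      have h5 := mul_le_mul_of_nonneg_left key hx'.le
      have hxx : x * (u * v / x) = u * v := by field_simp
      nlinarith
    rw [h2] at h4
    have h3 : x - u * v ≤ x * Real.log x - x * Real.log u - x * Real.log v := by
      nlinarith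
    have hR : x * Real.logb 2 x - x * Real.logb 2 u - x * Real.logb 2 v
        = (x * Real.log x - x * Real.log u - x * Real.log v) / Real.log 2 := by
      simp only [Real.logb]
      ring
    rw [hR]
    exact (div_le_div_iff_of_pos_right hlog2).mpr h3

lemma mutInfo_nonneg [DecidableEq α] [DecidableEq β] {p : Ω → ℝ} (hp : IsPMF p)
    (A : Ω → α) (B : Ω → β) : 0 ≤ mutInfo p A B := by
  obtain ⟨hp0, hp1⟩ := hp
  have hsub : Finset.univ.image (fun ω => (A ω, B ω))
      ⊆ (Finset.univ.image A) ×ˢ (Finset.univ.image B) := by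
    intro w hw
    simp only [Finset.mem_image, Finset.mem_univ, true_and] at hw
    obtain ⟨ω, rfl⟩ := hw
    exact Finset.mem_product.mpr
      ⟨Finset.mem_image_of_mem _ (Finset.mem_univ _),
        Finset.mem_image_of_mem _ (Finset.mem_univ _)⟩
  have hmargA : ∀ a, pr p A a
      = ∑ b ∈ Finset.univ.image B, pr p (fun ω => (A ω, B ω)) (a, b) := fun a =>
    pr_marg_fst p A B (le_refl _) a
  have hmargB : ∀ b, pr p B b
      = ∑ a ∈ Finset.univ.image A, pr p (fun ω => (A ω, B ω)) (a, b) := fun b =>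
    pr_marg_snd p A B (le_refl _) b
  have hentAB : ent p (fun ω => (A ω, B ω))
      = -∑ a ∈ Finset.univ.image A, ∑ b ∈ Finset.univ.image B,
          pr p (fun ω => (A ω, B ω)) (a, b)
            * Real.logb 2 (pr p (fun ω => (A ω, B ω)) (a, b)) := by
    rw [ent_superset p _ hsub, Finset.sum_product]
  have hentA : ent p A
      = -∑ a ∈ Finset.univ.image A, ∑ b ∈ Finset.univ.image B,
          pr p (fun ω => (A ω, B ω)) (a, b) * Real.logb 2 (pr p A a) := by
    unfold ent
    congr 1
    refine Finset.sum_congr rfl fun a _ => ?_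
    rw [← Finset.sum_mul, ← hmargA a]
  have hentB : ent p B
      = -∑ a ∈ Finset.univ.image A, ∑ b ∈ Finset.univ.image B,
          pr p (fun ω => (A ω, B ω)) (a, b) * Real.logb 2 (pr p B b) := by
    unfold ent
    rw [Finset.sum_comm]
    congr 1
    refine Finset.sum_congr rfl fun b _ => ?_
    rw [← Finset.sum_mul, ← hmargB b]
  have key : ∑ a ∈ Finset.univ.image A, ∑ b ∈ Finset.univ.image B,
      (pr p (fun ω => (A ω, B ω)) (a, b) - pr p A a * pr p B b) / Real.log 2
      ≤ ∑ a ∈ Finset.univ.image A, ∑ b ∈ Finset.univ.image B,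
        (pr p (fun ω => (A ω, B ω)) (a, b)
            * Real.logb 2 (pr p (fun ω => (A ω, B ω)) (a, b))
          - pr p (fun ω => (A ω, B ω)) (a, b) * Real.logb 2 (pr p A a)
          - pr p (fun ω => (A ω, B ω)) (a, b) * Real.logb 2 (pr p B b)) := by
    refine Finset.sum_le_sum fun a _ => Finset.sum_le_sum fun b _ => ?_
    exact gibbs_term (pr_nonneg hp0 _ _) (pr_pair_le_fst hp0 A B a b)
      (pr_pair_le_snd hp0 A B a b) (pr_nonneg hp0 A a) (pr_nonneg hp0 B b)
  have hzero : ∑ a ∈ Finset.univ.image A, ∑ b ∈ Finset.univ.image B,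
      (pr p (fun ω => (A ω, B ω)) (a, b) - pr p A a * pr p B b) / Real.log 2 = 0 := by
    have e1 : ∑ a ∈ Finset.univ.image A, ∑ b ∈ Finset.univ.image B,
        pr p (fun ω => (A ω, B ω)) (a, b) = 1 := by
      simp_rw [← hmargA]
      rw [sum_pr, hp1]
    have e2 : ∑ a ∈ Finset.univ.image A, ∑ b ∈ Finset.univ.image B,
        pr p A a * pr p B b = 1 := by
      rw [← Finset.sum_mul_sum]
      rw [sum_pr, sum_pr, hp1, one_mul]
    simp_rw [div_eq_mul_inv, sub_mul, Finset.sum_sub_distrib, ← Finset.sum_mul]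
    rw [e1, e2, sub_self]
  unfold mutInfo
  rw [hentA, hentB, hentAB]
  have hfin := le_trans (le_of_eq hzero.symm) key
  simp_rw [Finset.sum_sub_distrib] at hfin
  linarith

set_option maxHeartbeats 2000000 in
lemma condMutInfo_decomp [DecidableEq α] [DecidableEq β] [DecidableEq γ]
    {p : Ω → ℝ} (hp : ∀ ω, 0 ≤ p ω) (A : Ω → α) (B : Ω → β) (C : Ω → γ) :
    condMutInfo p A B C
      = ∑ c ∈ Finset.univ.image C, pr p C c * mutInfo (condp p C c) A B := by
  have hinj : Function.Injective (fun v : α × β × γ => ((v.1, v.2.1), v.2.2)) := by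
    intro v w h
    obtain ⟨a, b, c⟩ := v
    obtain ⟨d, e, f⟩ := w
    simp only [Prod.mk.injEq] at h ⊢
    exact ⟨h.1.1, h.1.2, h.2⟩
  have h3 : ent p (fun ω => ((A ω, B ω), C ω)) = ent p (fun ω => (A ω, B ω, C ω)) :=
    ent_comp_inj p (fun ω => (A ω, B ω, C ω))
      (fun v : α × β × γ => ((v.1, v.2.1), v.2.2)) hinj
  unfold condMutInfo
  rw [← h3, ent_pair hp A C, ent_pair hp B C, ent_pair hp (fun ω => (A ω, B ω)) C]
  simp only [mutInfo, mul_sub, mul_add]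
  rw [Finset.sum_sub_distrib, Finset.sum_add_distrib]
  ring

end Aux2

set_option maxHeartbeats 4000000 in
/-- If `X ~ PX` on `𝒳` is independent of the pair `(S, Z)`, then
`I(S - X; X | Z) ≥ min_θ I(S̃ - X̃; X̃) = J*`. -/
theorem condMutInfo_ge_Jstar (mx ms : ℕ)
    (PX : Fin (mx + 1) → ℝ) (hPX : IsPMF PX)
    {Ω γ : Type*} [Fintype Ω] [DecidableEq γ]
    (p : Ω → ℝ) (hp : IsPMF p)
    (Xv : Ω → Fin (mx + 1)) (Sv : Ω → Fin (ms + 1)) (Zv : Ω → γ)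
    (hindep : ∀ (x : Fin (mx + 1)) (s : Fin (ms + 1)) (z : γ),
      pr p (fun ω => (Xv ω, Sv ω, Zv ω)) (x, s, z)
        = PX x * pr p (fun ω => (Sv ω, Zv ω)) (s, z)) :
    Jstar mx ms PX ≤
      condMutInfo p (fun ω => ((Sv ω : ℕ) : ℤ) - ((Xv ω : ℕ) : ℤ)) Xv Zv := by
  classical
  obtain ⟨hp0, hp1⟩ := hp
  rw [condMutInfo_decomp hp0 (fun ω => ((Sv ω : ℕ) : ℤ) - ((Xv ω : ℕ) : ℤ)) Xv Zv]
  have hlb : ∀ r ∈ {r : ℝ | ∃ θ : Fin (ms + 1) → ℝ, IsPMF θ ∧ iidMI mx ms PX θ = r},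
      (0 : ℝ) ≤ r := by
    rintro r ⟨θ, hθ, rfl⟩
    have hq : IsPMF (fun ω : Fin (mx + 1) × Fin (ms + 1) => PX ω.1 * θ ω.2) := by
      constructor
      · intro ω; exact mul_nonneg (hPX.1 _) (hθ.1 _)
      · rw [Fintype.sum_prod_type]
        have hx : ∀ x : Fin (mx + 1), ∑ s : Fin (ms + 1), PX x * θ s = PX x := by
          intro x; rw [← Finset.mul_sum, hθ.2, mul_one]
        simp_rw [hx]
        exact hPX.2
    exact mutInfo_nonneg hq _ _
  have hbdd : BddBelow {r : ℝ | ∃ θ : Fin (ms + 1) → ℝ, IsPMF θ ∧ iidMI mx ms PX θ = r} :=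
    ⟨0, hlb⟩
  have hsumP : ∑ z ∈ Finset.univ.image Zv, pr p Zv z = 1 := by rw [sum_pr, hp1]
  calc Jstar mx ms PX
      = ∑ z ∈ Finset.univ.image Zv, pr p Zv z * Jstar mx ms PX := by
        rw [← Finset.sum_mul, hsumP, one_mul]
    _ ≤ ∑ z ∈ Finset.univ.image Zv, pr p Zv z
          * mutInfo (condp p Zv z) (fun ω => ((Sv ω : ℕ) : ℤ) - ((Xv ω : ℕ) : ℤ)) Xv := by
        refine Finset.sum_le_sum fun z _ => ?_
        rcases eq_or_lt_of_le (pr_nonneg hp0 Zv z) with h0 | hPz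
        · rw [← h0, zero_mul, zero_mul]
        · refine mul_le_mul_of_nonneg_left ?_ (le_of_lt hPz)
          set θz : Fin (ms + 1) → ℝ :=
            fun s => pr p (fun ω => (Sv ω, Zv ω)) (s, z) / pr p Zv z with hθz
          have hθpmf : IsPMF θz := by
            constructor
            · intro s; exact div_nonneg (pr_nonneg hp0 _ _) (le_of_lt hPz)
            · have hmarg : ∑ s : Fin (ms + 1), pr p (fun ω => (Sv ω, Zv ω)) (s, z)
                  = pr p Zv z :=
                (pr_marg_snd p Sv Zv (Finset.subset_univ _) z).symm
              simp only [hθz]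
              rw [← Finset.sum_div, hmarg, div_self (ne_of_gt hPz)]
          have hjoint : ∀ (x : Fin (mx + 1)) (s : Fin (ms + 1)),
              pr (condp p Zv z) (fun ω => (Xv ω, Sv ω)) (x, s) = PX x * θz s := by
            intro x s
            have h1 : pr (condp p Zv z) (fun ω => (Xv ω, Sv ω)) (x, s)
                = pr p (fun ω => ((Xv ω, Sv ω), Zv ω)) ((x, s), z) / pr p Zv z :=
              pr_condp p Zv z _ _
            rw [h1, pr_pair_assoc p Xv Sv Zv x s z, hindep x s z, mul_div_assoc]
          have hid : ∀ v : Fin (mx + 1) × Fin (ms + 1),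
              pr (fun ω : Fin (mx + 1) × Fin (ms + 1) => PX ω.1 * θz ω.2)
                (fun ω => ω) v = PX v.1 * θz v.2 := by
            intro v
            unfold pr
            rw [Finset.filter_eq' Finset.univ v]
            simp
          have hMI : mutInfo (condp p Zv z)
              (fun ω => ((Sv ω : ℕ) : ℤ) - ((Xv ω : ℕ) : ℤ)) Xv = iidMI mx ms PX θz := by
            unfold iidMI
            apply mutInfo_congr
            intro w x
            have hL : pr (condp p Zv z)
                (fun ω => (((Sv ω : ℕ) : ℤ) - ((Xv ω : ℕ) : ℤ), Xv ω)) (w, x)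
                = ∑ v : Fin (mx + 1) × Fin (ms + 1),
                    if ((((v.2 : ℕ) : ℤ) - ((v.1 : ℕ) : ℤ)), v.1) = (w, x)
                    then pr (condp p Zv z) (fun ω => (Xv ω, Sv ω)) v else 0 :=
              pr_comp (condp p Zv z) (fun ω => (Xv ω, Sv ω))
                (fun v => ((((v.2 : ℕ) : ℤ) - ((v.1 : ℕ) : ℤ)), v.1)) (w, x)
            have hR : pr (fun ω : Fin (mx + 1) × Fin (ms + 1) => PX ω.1 * θz ω.2)
                (fun ω => ((((ω.2 : ℕ) : ℤ) - ((ω.1 : ℕ) : ℤ)), ω.1)) (w, x)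
                = ∑ v : Fin (mx + 1) × Fin (ms + 1),
                    if ((((v.2 : ℕ) : ℤ) - ((v.1 : ℕ) : ℤ)), v.1) = (w, x)
                    then pr (fun ω : Fin (mx + 1) × Fin (ms + 1) => PX ω.1 * θz ω.2)
                      (fun ω => ω) v else 0 :=
              pr_comp (fun ω : Fin (mx + 1) × Fin (ms + 1) => PX ω.1 * θz ω.2)
                (fun ω => ω)
                (fun v : Fin (mx + 1) × Fin (ms + 1) =>
                  ((((v.2 : ℕ) : ℤ) - ((v.1 : ℕ) : ℤ)), v.1)) (w, x)
            have hmid : ∑ v : Fin (mx + 1) × Fin (ms + 1),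
                (if ((((v.2 : ℕ) : ℤ) - ((v.1 : ℕ) : ℤ)), v.1) = (w, x)
                  then pr (condp p Zv z) (fun ω => (Xv ω, Sv ω)) v else 0)
                = ∑ v : Fin (mx + 1) × Fin (ms + 1),
                  (if ((((v.2 : ℕ) : ℤ) - ((v.1 : ℕ) : ℤ)), v.1) = (w, x)
                    then pr (fun ω : Fin (mx + 1) × Fin (ms + 1) => PX ω.1 * θz ω.2)
                      (fun ω => ω) v else 0) := by
              refine Finset.sum_congr rfl fun v _ => ?_
              have e1 : pr (condp p Zv z) (fun ω => (Xv ω, Sv ω)) v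
                  = PX v.1 * θz v.2 := hjoint v.1 v.2
              have e2 : pr (fun ω : Fin (mx + 1) × Fin (ms + 1) => PX ω.1 * θz ω.2)
                  (fun ω => ω) v = PX v.1 * θz v.2 := hid v
              rw [e1, e2]
            exact hL.trans (hmid.trans hR.symm)
          rw [hMI]
          exact csInf_le hbdd ⟨θz, hθpmf, rfl⟩
end SmartMeter
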